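/- arXiv:2009.13260 — 4 statements merged into one kernel-verified Lean document; each statement's English description precedes it below -/
import Mathlib

section
/- For all valuations v, v', every clock x, every constant d ∈ ℕ and every ◁ ∈ {<, ≤}: (i) v ⊑_{x ◁ d} v' if and only if v ⊭ x ◁ d or v'(x) ≤ v(x); (ii) v ⊑_{d ◁ x} v' if and only if v' ⊨ d ◁ x or v(x) ≤ v'(x). -/
open Classical

/-- Comparison operator `◁ ∈ {<, ≤}`. -/
inductive Ineq where
  | lt
  | le

def Ineq.holds : Ineq → ℝ → ℝ → Prop
  | .lt, a, b => a < b
  | .le, a, b => a ≤ b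

/-- Atomic constraints over a set `X` of clocks. -/
inductive AC (X : Type) where
  | tt
  | ff
  | upper (x : X) (o : Ineq) (c : ℕ)              -- x ◁ c
  | lower (c : ℕ) (o : Ineq) (x : X)              -- c ◁ x
  | dUpper (x y : X) (o : Ineq) (c : ℕ)           -- x - y ◁ c
  | dLower (c : ℕ) (o : Ineq) (x y : X)           -- c ◁ x - y

/-- A valuation maps clocks to nonnegative reals. -/
abbrev Val (X : Type) := X → NNReal

def AC.sat {X : Type} (v : Val X) : AC X → Prop
  | .tt => True
  | .ff => False
  | .upper x o c => o.holds (v x : ℝ) (c : ℝ)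
  | .lower c o x => o.holds (c : ℝ) (v x : ℝ)
  | .dUpper x y o c => o.holds ((v x : ℝ) - (v y : ℝ)) (c : ℝ)
  | .dLower c o x y => o.holds (c : ℝ) ((v x : ℝ) - (v y : ℝ))

/-- A constraint (guard) is a finite conjunction of atomic constraints. -/
abbrev Guard (X : Type) := List (AC X)

def satG {X : Type} (v : Val X) (g : Guard X) : Prop := ∀ φ ∈ g, AC.sat v φ

/-- The valuation `v + δ`. -/
def delay {X : Type} (v : Val X) (δ : NNReal) : Val X := fun x => v x + δ

/-- `v ⊑_G v'` for a set `G` of atomic constraints. -/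
def simS {X : Type} (G : Set (AC X)) (v v' : Val X) : Prop :=
  ∀ δ : NNReal, ∀ φ ∈ G, AC.sat (delay v δ) φ → AC.sat (delay v' δ) φ

/-- `v ⊑_φ v'` for a single constraint `φ` (a conjunction of atomic constraints). -/
def simC {X : Type} (g : Guard X) (v v' : Val X) : Prop :=
  ∀ δ : NNReal, satG (delay v δ) g → satG (delay v' δ) g

/-- Right-hand side of an atomic update: `x := c` or `x := y + d`. -/
inductive Rhs (X : Type) where
  | const (c : ℕ)
  | clock (y : X) (d : ℤ)

/-- An update assigns a right-hand side to every clock. -/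
abbrev Update (X : Type) := X → Rhs X

def Rhs.eval {X : Type} (v : Val X) : Rhs X → ℝ
  | .const c => (c : ℝ)
  | .clock y d => (v y : ℝ) + (d : ℝ)

/-- `up(v) ≥ 0`. -/
def Update.nonneg {X : Type} (up : Update X) (v : Val X) : Prop :=
  ∀ x, 0 ≤ Rhs.eval v (up x)

/-- The valuation `up(v)` (meaningful when `up.nonneg v`). -/
noncomputable def Update.app {X : Type} (up : Update X) (v : Val X) : Val X :=
  fun x => Real.toNNReal (Rhs.eval v (up x))

/-- `up⁻¹(φ)` for an atomic constraint `φ`: simultaneous substitution of `up_x` for `x`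
rewritten to an equivalent atomic constraint (possibly ⊤ or ⊥). -/
noncomputable def upInvA {X : Type} (up : Update X) : AC X → AC X
  | .tt => .tt
  | .ff => .ff
  | .upper x o c =>
      match up x with
      | .const a => if o.holds (a : ℝ) (c : ℝ) then .tt else .ff
      | .clock y d => if (c : ℤ) - d < 0 then .ff else .upper y o ((c : ℤ) - d).toNat
  | .lower c o x =>
      match up x with
      | .const a => if o.holds (c : ℝ) (a : ℝ) then .tt else .ff
      | .clock y d => if (c : ℤ) - d < 0 then .tt else .lower ((c : ℤ) - d).toNat o y
  | .dUpper x y o c =>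
      match up x, up y with
      | .const a, .const b => if o.holds ((a : ℝ) - (b : ℝ)) (c : ℝ) then .tt else .ff
      | .const a, .clock z e =>
          if (a : ℤ) - e - (c : ℤ) < 0 then .tt
          else .lower ((a : ℤ) - e - (c : ℤ)).toNat o z
      | .clock z e, .const b =>
          if (c : ℤ) + (b : ℤ) - e < 0 then .ff
          else .upper z o ((c : ℤ) + (b : ℤ) - e).toNat
      | .clock z e, .clock w f =>
          if (c : ℤ) - e + f < 0 then .dLower (-((c : ℤ) - e + f)).toNat o w z
          else .dUpper z w o ((c : ℤ) - e + f).toNat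
  | .dLower c o x y =>
      match up x, up y with
      | .const a, .const b => if o.holds (c : ℝ) ((a : ℝ) - (b : ℝ)) then .tt else .ff
      | .const a, .clock z e =>
          if (a : ℤ) - e - (c : ℤ) < 0 then .ff
          else .upper z o ((a : ℤ) - e - (c : ℤ)).toNat
      | .clock z e, .const b =>
          if (c : ℤ) + (b : ℤ) - e < 0 then .tt
          else .lower ((c : ℤ) + (b : ℤ) - e).toNat o z
      | .clock z e, .clock w f =>
          if (c : ℤ) - e + f < 0 then .dUpper w z o (-((c : ℤ) - e + f)).toNat
          else .dLower ((c : ℤ) - e + f).toNat o z w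

/-- `up⁻¹` of a conjunction of atomic constraints. -/
noncomputable def upInvC {X : Type} (up : Update X) (g : Guard X) : Guard X :=
  g.map (upInvA up)

/-- The guard `g` contains an upper-bound constraint `x ◁₁ c` on clock `x`. -/
def hasUpperG {X : Type} (g : Guard X) (x : X) : Prop := ∃ o c, AC.upper x o c ∈ g

/-- The smallest constant of an upper-bound constraint on `x` in `g`. -/
noncomputable def minUpperG {X : Type} (g : Guard X) (x : X) : ℕ :=
  sInf {c | ∃ o, AC.upper x o c ∈ g}

/-- Condition of Case 3 of the table defining `wp`. -/
def case3G {X : Type} (g : Guard X) (x y : X) (d : ℕ) : Prop :=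
  (∃ o c, AC.upper x o c ∈ g ∧ c < d) ∨
  (∃ o c, AC.dUpper x y o c ∈ g ∧ c < d) ∨
  (∃ o e, AC.dLower e o x y ∈ g ∧ d < e)

/-- The pre `wp(φ, g, up)` of an atomic constraint under a guard-update pair. -/
noncomputable def wp {X : Type} (φ : AC X) (g : Guard X) (up : Update X) : AC X :=
  match upInvA up φ with
  | .upper x o d => if hasUpperG g x then .tt else .upper x o d
  | .lower d o x =>
      if hasUpperG g x ∧ minUpperG g x < d then .lower (minUpperG g x) .le x
      else .lower d o x
  | .dUpper x y o d => if case3G g x y d then .tt else .dUpper x y o d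
  | .dLower d o x y => if case3G g x y d then .tt else .dLower d o x y
  | ψ => ψ

/-- A transition of an updatable timed automaton. -/
structure UTrans (Q X : Type) where
  src : Q
  guard : Guard X
  update : Update X
  tgt : Q

/-- An updatable timed automaton (UTA). -/
structure UTA (Q X : Type) where
  init : Q
  trans : List (UTrans Q X)
  acc : Set Q

/-- (Non-reduced) G-map. -/
def IsGMap {Q X : Type} (A : UTA Q X) (G : Q → Set (AC X)) : Prop :=
  ∀ t ∈ A.trans,
    (∀ φ ∈ t.guard, φ ∈ G t.src) ∧
    (∀ x : X, upInvA t.update (AC.lower 0 .le x) ∈ G t.src) ∧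
    (∀ φ ∈ G t.tgt, upInvA t.update φ ∈ G t.src)

/-- Reduced G-map. -/
def IsRedGMap {Q X : Type} (A : UTA Q X) (G : Q → Set (AC X)) : Prop :=
  ∀ t ∈ A.trans,
    (∀ φ ∈ t.guard, φ ∈ G t.src) ∧
    (∀ x : X, wp (AC.lower 0 .le x) t.guard t.update ∈ G t.src) ∧
    (∀ φ ∈ G t.tgt, wp φ t.guard t.update ∈ G t.src)

/-- Pointwise intersection of all G-maps: the smallest G-map. -/
def minGMap {Q X : Type} (A : UTA Q X) : Q → Set (AC X) :=
  fun q => ⋂ G ∈ {G | IsGMap A G}, G q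

/-- Pointwise intersection of all reduced G-maps: the smallest reduced G-map. -/
def minRedGMap {Q X : Type} (A : UTA Q X) : Q → Set (AC X) :=
  fun q => ⋂ G ∈ {G | IsRedGMap A G}, G q

/-- Action transition `(q, v) →t (q', up(v))` of the UTA semantics. -/
def actionStep {Q X : Type} (A : UTA Q X) (t : UTrans Q X) (c c' : Q × Val X) : Prop :=
  t ∈ A.trans ∧ c.1 = t.src ∧ c'.1 = t.tgt ∧ satG c.2 t.guard ∧
  t.update.nonneg c.2 ∧ c'.2 = t.update.app c.2

/-- A simulation on the UTA semantics: a preorder relating only configurations with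
the same state, preserved by delays and actions. -/
def IsSimulation {Q X : Type} (A : UTA Q X)
    (R : (Q × Val X) → (Q × Val X) → Prop) : Prop :=
  (∀ p, R p p) ∧
  (∀ p₁ p₂ p₃, R p₁ p₂ → R p₂ p₃ → R p₁ p₃) ∧
  (∀ p p', R p p' → p.1 = p'.1) ∧
  (∀ q (v v' : Val X) (δ : NNReal), R (q, v) (q, v') → R (q, delay v δ) (q, delay v' δ)) ∧
  (∀ q (v v' : Val X) t p₁, R (q, v) (q, v') → actionStep A t (q, v) p₁ →
      ∃ v₁', actionStep A t (q, v') (p₁.1, v₁') ∧ R p₁ (p₁.1, v₁'))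

/-- A run of a UTA: alternating delays and actions from the initial configuration. -/
def IsRun {Q X : Type} (A : UTA Q X) (n : ℕ) (qs : ℕ → Q) (ds : ℕ → NNReal)
    (vs : ℕ → Val X) : Prop :=
  qs 0 = A.init ∧ (∀ x, vs 0 x = 0) ∧
  ∀ i, i < n → ∃ t, actionStep A t (qs i, delay (vs i) (ds i)) (qs (i + 1), vs (i + 1))

/-- Configurations occurring on some run of the UTA. -/
def ReachCfg {Q X : Type} (A : UTA Q X) (p : Q × Val X) : Prop :=
  ∃ n qs ds vs, IsRun A n qs ds vs ∧ ∃ δ : NNReal, p.1 = qs n ∧ p.2 = delay (vs n) δ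

/-- Timed automaton with subtraction: every atomic update is `x := 0` or `x := x - c`. -/
def IsSubtractionTA {Q X : Type} (A : UTA Q X) : Prop :=
  ∀ t ∈ A.trans, ∀ x : X,
    t.update x = Rhs.const 0 ∨ ∃ c : ℕ, t.update x = Rhs.clock x (-(c : ℤ))

/-- Timed automaton with bounded subtraction with bounds `M`. -/
def IsBoundedSub {Q X : Type} (A : UTA Q X) (M : X → ℕ) : Prop :=
  IsSubtractionTA A ∧
  ∀ q v, ReachCfg A (q, v) → ∀ t ∈ A.trans, t.src = q → satG v t.guard →
    ∀ (x : X) (c : ℕ), 0 < c → t.update x = Rhs.clock x (-(c : ℤ)) → (v x : ℝ) ≤ (M x : ℝ)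

/-- Timed automaton with syntactically bounded subtraction. -/
def IsSynBoundedSub {Q X : Type} (A : UTA Q X) : Prop :=
  IsSubtractionTA A ∧
  ∀ t ∈ A.trans, ∀ (x : X) (c : ℕ), 0 < c → t.update x = Rhs.clock x (-(c : ℤ)) →
    ∃ o c', AC.upper x o c' ∈ t.guard

/-- The constant of an atomic constraint. -/
def AC.cst {X : Type} : AC X → ℕ
  | .tt => 0
  | .ff => 0
  | .upper _ _ c => c
  | .lower c _ _ => c
  | .dUpper _ _ _ c => c
  | .dLower c _ _ _ => c

/-- The constant occurring in the right-hand side of an atomic update. -/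
def Rhs.cst {X : Type} : Rhs X → ℕ
  | .const c => c
  | .clock _ d => d.natAbs

/-- Maximum constant occurring in the guards of a UTA. -/
def maxGuardConst {Q X : Type} (A : UTA Q X) : ℕ :=
  (A.trans.map fun t => (t.guard.map AC.cst).foldr max 0).foldr max 0

/-- Maximum absolute value of a constant occurring in the updates of a UTA. -/
noncomputable def maxUpdateConst {Q X : Type} [Fintype X] (A : UTA Q X) : ℕ :=
  (A.trans.map fun t => Finset.univ.sup fun x => Rhs.cst (t.update x)).foldr max 0

/-- `L(G)(x)`: maximum constant of a lower-bound constraint on `x` in `G` (⊥ = −∞ if none). -/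
noncomputable def Lb {X : Type} (G : Set (AC X)) (x : X) : WithBot ℕ∞ :=
  ⨆ c ∈ {c : ℕ | ∃ o, AC.lower c o x ∈ G}, ((c : ℕ∞) : WithBot ℕ∞)

/-- `U(G)(x)`: maximum constant of an upper-bound constraint on `x` in `G` (⊥ = −∞ if none). -/
noncomputable def Ub {X : Type} (G : Set (AC X)) (x : X) : WithBot ℕ∞ :=
  ⨆ c ∈ {c : ℕ | ∃ o, AC.upper x o c ∈ G}, ((c : ℕ∞) : WithBot ℕ∞)

def AC.isDiag {X : Type} : AC X → Prop
  | .dUpper _ _ _ _ => True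
  | .dLower _ _ _ _ => True
  | _ => False

/-- `G^d`: the diagonal constraints of `G`. -/
def diagOf {X : Type} (G : Set (AC X)) : Set (AC X) := {φ ∈ G | φ.isDiag}

def AC.isWeak {X : Type} : AC X → Prop
  | .upper _ o _ => o = .le
  | .lower _ o _ => o = .le
  | .dUpper _ _ o _ => o = .le
  | .dLower _ o _ _ => o = .le
  | _ => True

/-- All atomic constraints in guards of `A` use the weak inequality `≤`. -/
def weakGuards {Q X : Type} (A : UTA Q X) : Prop :=
  ∀ t ∈ A.trans, ∀ φ ∈ t.guard, φ.isWeak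

/-- A context: an atomic constraint with a hole for the constant. -/
inductive Ctx (X : Type) where
  | upper (x : X)      -- x ≤ ·
  | lower (x : X)      -- · ≤ x
  | dUpper (x y : X)   -- x - y ≤ ·
  | dLower (x y : X)   -- · ≤ x - y

def Ctx.fill {X : Type} : Ctx X → ℕ → AC X
  | .upper x, c => .upper x .le c
  | .lower x, c => .lower c .le x
  | .dUpper x y, c => .dUpper x y .le c
  | .dLower x y, c => .dLower c .le x y

/-- Propagation sequence `(q_i, ctx_i[c_i]) → ⋯ → (q_j, ctx_j[c_j])`. -/
def PropSeq {Q X : Type} (A : UTA Q X) (i j : ℕ) (qs : ℕ → Q) (ctxs : ℕ → Ctx X)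
    (cs : ℕ → ℕ) : Prop :=
  ∀ k, i ≤ k → k < j → ∃ t ∈ A.trans, t.src = qs (k + 1) ∧ t.tgt = qs k ∧
    (ctxs (k + 1)).fill (cs (k + 1)) = wp ((ctxs k).fill (cs k)) t.guard t.update

/-- LU-like characterization of the preorder for non-diagonal
atomic constraints. -/
theorem stmt1 {X : Type} [Fintype X] (v v' : Val X) (x : X) (d : ℕ) (o : Ineq) :
    (simS {AC.upper x o d} v v' ↔ (¬ AC.sat v (AC.upper x o d) ∨ v' x ≤ v x)) ∧
    (simS {AC.lower d o x} v v' ↔ (AC.sat v' (AC.lower d o x) ∨ v x ≤ v' x)) := by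

  have hsingle : ∀ φ : AC X, simS {φ} v v' ↔
      ∀ δ : NNReal, AC.sat (delay v δ) φ → AC.sat (delay v' δ) φ := by
    intro φ
    constructor
    · intro h δ; exact h δ φ rfl
    · intro h δ ψ hψ hs
      rw [Set.mem_singleton_iff] at hψ; subst hψ; exact h δ hs
  constructor
  · rw [hsingle]
    constructor
    · intro h
      by_contra hc
      push_neg at hc
      obtain ⟨h1, h2⟩ := hc
      have hvv : (v x : ℝ) < v' x := by exact_mod_cast h2
      cases o with
      | lt =>
        have hv : (v x : ℝ) < d := h1
        have hh := h (Real.toNNReal ((d:ℝ) - v' x))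
        simp only [AC.sat, Ineq.holds, delay, NNReal.coe_add, Real.coe_toNNReal'] at hh
        rcases le_total ((d:ℝ) - v' x) 0 with hle | hle
        · rw [max_eq_right hle] at hh; linarith [hh (by linarith)]
        · rw [max_eq_left hle] at hh; linarith [hh (by linarith)]
      | le =>
        have hv : (v x : ℝ) ≤ d := h1
        have hh := h (Real.toNNReal ((d:ℝ) - v x))
        simp only [AC.sat, Ineq.holds, delay, NNReal.coe_add, Real.coe_toNNReal'] at hh
        rcases le_total ((d:ℝ) - v x) 0 with hle | hle
        · rw [max_eq_right hle] at hh; linarith [hh (by linarith)]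
        · rw [max_eq_left hle] at hh; linarith [hh (by linarith)]
    · rintro (h1 | h2) δ hs
      · exfalso
        apply h1
        have hδ : (0:ℝ) ≤ δ := δ.coe_nonneg
        cases o with
        | lt =>
          have hs' : (v x : ℝ) + δ < d := by
            simpa [AC.sat, Ineq.holds, delay] using hs
          show (v x : ℝ) < d
          linarith
        | le =>
          have hs' : (v x : ℝ) + δ ≤ d := by
            simpa [AC.sat, Ineq.holds, delay] using hs
          show (v x : ℝ) ≤ d
          linarith
      · have h2' : (v' x : ℝ) ≤ v x := by exact_mod_cast h2
        cases o with
        | lt =>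
          have hs' : (v x : ℝ) + δ < d := by
            simpa [AC.sat, Ineq.holds, delay] using hs
          show ((v' x + δ : NNReal) : ℝ) < d
          push_cast
          linarith
        | le =>
          have hs' : (v x : ℝ) + δ ≤ d := by
            simpa [AC.sat, Ineq.holds, delay] using hs
          show ((v' x + δ : NNReal) : ℝ) ≤ d
          push_cast
          linarith
  · rw [hsingle]
    constructor
    · intro h
      by_contra hc
      push_neg at hc
      obtain ⟨h1, h2⟩ := hc
      have hvv : (v' x : ℝ) < v x := by exact_mod_cast h2
      cases o with
      | lt =>
        have hv : ¬ (d:ℝ) < v' x := h1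
        have hh := h (Real.toNNReal ((d:ℝ) - v' x))
        simp only [AC.sat, Ineq.holds, delay, NNReal.coe_add, Real.coe_toNNReal'] at hh
        rcases le_total ((d:ℝ) - v' x) 0 with hle | hle
        · rw [max_eq_right hle] at hh
          exact hv (by linarith [hh (by linarith)])
        · rw [max_eq_left hle] at hh; linarith [hh (by linarith)]
      | le =>
        have hv : ¬ (d:ℝ) ≤ v' x := h1
        have hh := h (Real.toNNReal ((d:ℝ) - v x))
        simp only [AC.sat, Ineq.holds, delay, NNReal.coe_add, Real.coe_toNNReal'] at hh
        have hvd : (v' x : ℝ) < d := lt_of_not_ge hv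
        rcases le_total ((d:ℝ) - v x) 0 with hle | hle
        · rw [max_eq_right hle] at hh; linarith [hh (by linarith)]
        · rw [max_eq_left hle] at hh; linarith [hh (by linarith)]
    · rintro (h1 | h2) δ hs
      · have hδ : (0:ℝ) ≤ δ := δ.coe_nonneg
        cases o with
        | lt =>
          have h1' : (d:ℝ) < v' x := h1
          show (d:ℝ) < ((v' x + δ : NNReal) : ℝ)
          push_cast
          linarith
        | le =>
          have h1' : (d:ℝ) ≤ v' x := h1
          show (d:ℝ) ≤ ((v' x + δ : NNReal) : ℝ)
          push_cast
          linarith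
      · have h2' : (v x : ℝ) ≤ v' x := by exact_mod_cast h2
        cases o with
        | lt =>
          have hs' : (d:ℝ) < (v x : ℝ) + δ := by
            simpa [AC.sat, Ineq.holds, delay] using hs
          show (d:ℝ) < ((v' x + δ : NNReal) : ℝ)
          push_cast
          linarith
        | le =>
          have hs' : (d:ℝ) ≤ (v x : ℝ) + δ := by
            simpa [AC.sat, Ineq.holds, delay] using hs
          show (d:ℝ) ≤ ((v' x + δ : NNReal) : ℝ)
          push_cast
          linarith
end

section
/- Let (g, up) be a guard–update pair, φ an atomic constraint, and v, v' valuations such that v ⊨ g and v ⊑_{C_g} v', where C_g is the set of atomic constraints of g. If v ⊑_{wp(φ, g, up)} v' then v ⊑_{up⁻¹(φ)} v'. -/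
open Classical

lemma Ineq.holds_le' {o : Ineq} {a b : ℝ} (h : o.holds a b) : a ≤ b := by
  cases o
  · exact le_of_lt h
  · exact h

lemma Ineq.holds_of_lt' {o : Ineq} {a b : ℝ} (h : a < b) : o.holds a b := by
  cases o
  · exact h
  · exact h.le

lemma Ineq.holds_mono_left' {o : Ineq} {a a' b : ℝ} (h : a' ≤ a) (hh : o.holds a b) :
    o.holds a' b := by
  cases o
  · exact lt_of_le_of_lt h hh
  · exact le_trans h hh

lemma Ineq.holds_mono_right' {o : Ineq} {a b b' : ℝ} (h : b ≤ b') (hh : o.holds a b) :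
    o.holds a b' := by
  cases o
  · exact lt_of_lt_of_le hh h
  · exact le_trans hh h

lemma sim_upper' {X : Type} {x : X} {o : Ineq} {c : ℕ} {v v' : Val X}
    (hsim : ∀ δ : NNReal, AC.sat (delay v δ) (.upper x o c) → AC.sat (delay v' δ) (.upper x o c))
    (hv : AC.sat v (.upper x o c)) : (v' x : ℝ) ≤ (v x : ℝ) := by
  cases o with
  | le =>
    have hv' : (v x : ℝ) ≤ c := hv
    have hle : v x ≤ (c : NNReal) := by exact_mod_cast hv'
    have h1 := hsim ((c : NNReal) - v x) (by
      show ((v x + ((c : NNReal) - v x) : NNReal) : ℝ) ≤ (c : ℝ)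
      rw [add_tsub_cancel_of_le hle]; simp)
    have h1' : ((v' x : ℝ) + (((c : NNReal) - v x : NNReal) : ℝ)) ≤ (c : ℝ) := by
      simpa [delay, NNReal.coe_add, AC.sat, Ineq.holds] using h1
    have hsub : (((c : NNReal) - v x : NNReal) : ℝ) = (c : ℝ) - (v x : ℝ) := by
      rw [NNReal.coe_sub hle]; simp
    rw [hsub] at h1'
    linarith
  | lt =>
    by_contra hcon
    push_neg at hcon
    have hv' : (v x : ℝ) < c := hv
    set δ := (c : NNReal) - v' x with hδ
    have hge : (c : ℝ) ≤ (v' x : ℝ) + (δ : ℝ) := by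
      have : (c : NNReal) ≤ v' x + δ := le_add_tsub
      exact_mod_cast this
    have hlt : ((v x : ℝ) + (δ : ℝ)) < c := by
      rcases le_or_gt (c : NNReal) (v' x) with hle2 | hlt2
      · have hz : δ = 0 := tsub_eq_zero_of_le hle2
        rw [hz]; simpa using hv'
      · have hz : (δ : ℝ) = (c : ℝ) - (v' x : ℝ) := by
          rw [hδ, NNReal.coe_sub hlt2.le]; simp
        rw [hz]; linarith
    have h2 := hsim δ (by
      show ((v x + δ : NNReal) : ℝ) < (c : ℝ)
      push_cast; exact hlt)
    have h2' : ((v' x : ℝ) + (δ : ℝ)) < (c : ℝ) := by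
      simpa [delay, NNReal.coe_add, AC.sat, Ineq.holds] using h2
    linarith

lemma sim_lower' {X : Type} {x : X} {m : ℕ} {v v' : Val X}
    (hsim : ∀ δ : NNReal, AC.sat (delay v δ) (.lower m .le x) → AC.sat (delay v' δ) (.lower m .le x))
    (hv : (v x : ℝ) ≤ m) : (v x : ℝ) ≤ (v' x : ℝ) := by
  have hle : v x ≤ (m : NNReal) := by exact_mod_cast hv
  have h1 := hsim ((m : NNReal) - v x) (by
    show (m : ℝ) ≤ ((v x + ((m : NNReal) - v x) : NNReal) : ℝ)
    rw [add_tsub_cancel_of_le hle]; simp)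
  have h1' : (m : ℝ) ≤ (v' x : ℝ) + (((m : NNReal) - v x : NNReal) : ℝ) := by
    simpa [delay, NNReal.coe_add, AC.sat, Ineq.holds] using h1
  have hsub : (((m : NNReal) - v x : NNReal) : ℝ) = (m : ℝ) - (v x : ℝ) := by
    rw [NNReal.coe_sub hle]; simp
  rw [hsub] at h1'
  linarith

lemma sat_dUpper_delay' {X : Type} (v : Val X) (δ : NNReal) (x y : X) (o : Ineq) (c : ℕ) :
    AC.sat (delay v δ) (AC.dUpper x y o c) ↔ AC.sat v (AC.dUpper x y o c) := by
  show o.holds _ _ ↔ o.holds _ _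
  have h : ((delay v δ x : ℝ)) - ((delay v δ y : ℝ)) = (v x : ℝ) - (v y : ℝ) := by
    simp [delay]
  rw [h]

lemma sat_dLower_delay' {X : Type} (v : Val X) (δ : NNReal) (c : ℕ) (o : Ineq) (x y : X) :
    AC.sat (delay v δ) (AC.dLower c o x y) ↔ AC.sat v (AC.dLower c o x y) := by
  show o.holds _ _ ↔ o.holds _ _
  have h : ((delay v δ x : ℝ)) - ((delay v δ y : ℝ)) = (v x : ℝ) - (v y : ℝ) := by
    simp [delay]
  rw [h]

/-- Proposition: soundness of `wp`. If `v ⊨ g`, `v ⊑_{C_g} v'`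
and `v ⊑_{wp(φ,g,up)} v'`, then `v ⊑_{up⁻¹(φ)} v'`. -/
theorem stmt2 {X : Type} [Fintype X] (g : Guard X) (up : Update X) (φ : AC X)
    (v v' : Val X) (hg : satG v g) (hsim : simS {ψ | ψ ∈ g} v v')
    (h : simS {wp φ g up} v v') :
    simS {upInvA up φ} v v' := by
  have hwp : ∀ δ : NNReal, AC.sat (delay v δ) (wp φ g up) → AC.sat (delay v' δ) (wp φ g up) :=
    fun δ => h δ _ rfl
  intro δ ψ hψ
  rw [Set.mem_singleton_iff] at hψ
  subst hψ
  unfold wp at hwp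
  revert hwp
  rcases hE : upInvA up φ with _ | _ | ⟨x, o, d⟩ | ⟨d, o, x⟩ | ⟨x, y, o, d⟩ | ⟨d, o, x, y⟩
  · intro _ _; trivial
  · intro _ hsat; exact hsat.elim
  · -- upper
    intro hwp hsat
    dsimp only at hwp
    by_cases hU : hasUpperG g x
    · obtain ⟨o', c, hmem⟩ := hU
      have hvle : (v' x : ℝ) ≤ (v x : ℝ) :=
        sim_upper' (fun δ hh => hsim δ _ hmem hh) (hg _ hmem)
      have hsat' : o.holds ((v x : ℝ) + (δ : ℝ)) (d : ℝ) := by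
        simpa [AC.sat, delay, NNReal.coe_add] using hsat
      have hout : o.holds ((v' x : ℝ) + (δ : ℝ)) (d : ℝ) :=
        Ineq.holds_mono_left' (by linarith) hsat'
      simpa [AC.sat, delay, NNReal.coe_add] using hout
    · rw [if_neg hU] at hwp
      exact hwp δ hsat
  · -- lower
    intro hwp hsat
    dsimp only at hwp
    by_cases hC : hasUpperG g x ∧ minUpperG g x < d
    · rw [if_pos hC] at hwp
      obtain ⟨hU, hmd⟩ := hC
      have hne : {c : ℕ | ∃ o, AC.upper x o c ∈ g}.Nonempty := by
        obtain ⟨o', c, hc⟩ := hU; exact ⟨c, o', hc⟩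
      obtain ⟨o', hmem⟩ : minUpperG g x ∈ {c : ℕ | ∃ o, AC.upper x o c ∈ g} :=
        Nat.sInf_mem hne
      have hvm : (v x : ℝ) ≤ (minUpperG g x : ℝ) := Ineq.holds_le' (hg _ hmem)
      have hvv : (v x : ℝ) ≤ (v' x : ℝ) := sim_lower' hwp hvm
      have hsat' : o.holds (d : ℝ) ((v x : ℝ) + (δ : ℝ)) := by
        simpa [AC.sat, delay, NNReal.coe_add] using hsat
      have hout : o.holds (d : ℝ) ((v' x : ℝ) + (δ : ℝ)) :=
        Ineq.holds_mono_right' (by linarith) hsat'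
      simpa [AC.sat, delay, NNReal.coe_add] using hout
    · rw [if_neg hC] at hwp
      exact hwp δ hsat
  · -- dUpper
    intro hwp hsat
    dsimp only at hwp
    by_cases hC : case3G g x y d
    · rw [sat_dUpper_delay'] at hsat ⊢
      have hsat' : o.holds ((v x : ℝ) - (v y : ℝ)) (d : ℝ) := hsat
      have hvy' : (0 : ℝ) ≤ (v' y : ℝ) := (v' y).coe_nonneg
      rcases hC with ⟨o', c, hmem, hcd⟩ | ⟨o', c, hmem, hcd⟩ | ⟨o', e, hmem, hde⟩
      · have h1 : (v' x : ℝ) ≤ (v x : ℝ) :=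
          sim_upper' (fun δ hh => hsim δ _ hmem hh) (hg _ hmem)
        have h2 : (v x : ℝ) ≤ (c : ℝ) := Ineq.holds_le' (hg _ hmem)
        have hcd' : (c : ℝ) < (d : ℝ) := by exact_mod_cast hcd
        exact Ineq.holds_of_lt' (by linarith)
      · have h0 := hsim 0 _ hmem ((sat_dUpper_delay' v 0 x y o' c).2 (hg _ hmem))
        rw [sat_dUpper_delay'] at h0
        have h1 : (v' x : ℝ) - (v' y : ℝ) ≤ (c : ℝ) := Ineq.holds_le' h0
        have hcd' : (c : ℝ) < (d : ℝ) := by exact_mod_cast hcd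
        exact Ineq.holds_of_lt' (by linarith)
      · exfalso
        have h1 : (e : ℝ) ≤ (v x : ℝ) - (v y : ℝ) := Ineq.holds_le' (hg _ hmem)
        have h2 : (v x : ℝ) - (v y : ℝ) ≤ (d : ℝ) := Ineq.holds_le' hsat'
        have hde' : (d : ℝ) < (e : ℝ) := by exact_mod_cast hde
        linarith
    · rw [if_neg hC] at hwp
      exact hwp δ hsat
  · -- dLower
    intro hwp hsat
    dsimp only at hwp
    by_cases hC : case3G g x y d
    · rw [sat_dLower_delay'] at hsat ⊢
      have hsat' : (d : ℝ) ≤ (v x : ℝ) - (v y : ℝ) := Ineq.holds_le' hsat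
      rcases hC with ⟨o', c, hmem, hcd⟩ | ⟨o', c, hmem, hcd⟩ | ⟨o', e, hmem, hde⟩
      · exfalso
        have h2 : (v x : ℝ) ≤ (c : ℝ) := Ineq.holds_le' (hg _ hmem)
        have hy : (0 : ℝ) ≤ (v y : ℝ) := (v y).coe_nonneg
        have hcd' : (c : ℝ) < (d : ℝ) := by exact_mod_cast hcd
        linarith
      · exfalso
        have h2 : (v x : ℝ) - (v y : ℝ) ≤ (c : ℝ) := Ineq.holds_le' (hg _ hmem)
        have hcd' : (c : ℝ) < (d : ℝ) := by exact_mod_cast hcd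
        linarith
      · have h0 := hsim 0 _ hmem ((sat_dLower_delay' v 0 e o' x y).2 (hg _ hmem))
        rw [sat_dLower_delay'] at h0
        have h1 : (e : ℝ) ≤ (v' x : ℝ) - (v' y : ℝ) := Ineq.holds_le' h0
        have hde' : (d : ℝ) < (e : ℝ) := by exact_mod_cast hde
        exact Ineq.holds_of_lt' (by linarith)
    · rw [if_neg hC] at hwp
      exact hwp δ hsat
end

section
/- Let A be a timed automaton with syntactically bounded subtraction and let M̄ be the maximum constant occurring among the guards and updates of A. Then the map assigning to every state of A the (finite) set of all atomic constraints over X with constant at most M̄ is a reduced G-map for A. -/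
open Classical

lemma foldrMax_le {l : List ℕ} {a : ℕ} (h : a ∈ l) : a ≤ l.foldr max 0 := by
  induction l with
  | nil => simp at h
  | cons b l ih =>
    rcases List.mem_cons.mp h with rfl | h
    · exact le_max_left _ _
    · exact le_trans (ih h) (le_max_right _ _)

lemma guard_cst_le {Q X : Type} (A : UTA Q X) {t} (ht : t ∈ A.trans) {φ} (hφ : φ ∈ t.guard) :
    AC.cst φ ≤ maxGuardConst A := by
  have h1 : AC.cst φ ≤ (t.guard.map AC.cst).foldr max 0 :=
    foldrMax_le (List.mem_map_of_mem hφ)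
  exact h1.trans (foldrMax_le (List.mem_map_of_mem ht))

lemma update_cst_le {Q X : Type} [Fintype X] (A : UTA Q X) {t} (ht : t ∈ A.trans) (x : X) :
    Rhs.cst (t.update x) ≤ maxUpdateConst A := by
  have h1 : Rhs.cst (t.update x) ≤ Finset.univ.sup fun x => Rhs.cst (t.update x) :=
    Finset.le_sup (f := fun x => Rhs.cst (t.update x)) (Finset.mem_univ x)
  exact h1.trans (foldrMax_le (List.mem_map_of_mem ht))

lemma minUpper_le {Q X : Type} (A : UTA Q X) {t} (ht : t ∈ A.trans) {x} (hx : hasUpperG t.guard x) :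
    minUpperG t.guard x ≤ maxGuardConst A := by
  obtain ⟨o, c, hc⟩ := hx
  have h1 : minUpperG t.guard x ≤ c :=
    Nat.sInf_le (show c ∈ {c | ∃ o, AC.upper x o c ∈ t.guard} from ⟨o, hc⟩)
  exact h1.trans (guard_cst_le A ht hc)
lemma wp_cst_le {Q X : Type} [Fintype X] {A : UTA Q X} (h : IsSynBoundedSub A)
    {t : UTrans Q X} (ht : t ∈ A.trans) {φ : AC X}
    (hφ : φ.cst ≤ max (maxGuardConst A) (maxUpdateConst A)) :
    (wp φ t.guard t.update).cst ≤ max (maxGuardConst A) (maxUpdateConst A) := by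
  set M := max (maxGuardConst A) (maxUpdateConst A) with hM
  have hgM : maxGuardConst A ≤ M := le_max_left _ _
  have clk : ∀ x : X, t.update x = Rhs.const 0 ∨ ∃ c : ℕ, t.update x = Rhs.clock x (-(c:ℤ)) :=
    h.1 t ht
  have hupc : ∀ (x : X) (c : ℕ), t.update x = Rhs.clock x (-(c:ℤ)) → c ≤ M := by
    intro x c hx
    have h1 := update_cst_le A ht x
    rw [hx] at h1
    simp [Rhs.cst] at h1
    exact h1.trans (le_max_right _ _)
  have hub : ∀ (x : X) (c : ℕ), 0 < c → t.update x = Rhs.clock x (-(c:ℤ)) →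
      hasUpperG t.guard x := by
    intro x c hc hx
    obtain ⟨o, c', hg⟩ := h.2 t ht x c hc hx
    exact ⟨o, c', hg⟩
  have hmin : ∀ x : X, hasUpperG t.guard x → minUpperG t.guard x ≤ M :=
    fun x hx => (minUpper_le A ht hx).trans hgM
  cases φ with
  | tt => rw [wp.eq_def]; simp [upInvA, AC.cst]
  | ff => rw [wp.eq_def]; simp [upInvA, AC.cst]
  | upper x o d =>
    simp only [AC.cst] at hφ
    rcases clk x with hx | ⟨c, hx⟩
    · have hinv : upInvA t.update (AC.upper x o d) = AC.tt ∨
          upInvA t.update (AC.upper x o d) = AC.ff := by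
        simp only [upInvA, hx]; split <;> simp
      rcases hinv with h1 | h1 <;> rw [wp.eq_def, h1] <;> simp [AC.cst]
    · have hinv : upInvA t.update (AC.upper x o d) = AC.upper x o (d + c) := by
        simp only [upInvA, hx]
        split
        · exfalso; omega
        · have he : ((d:ℤ) - -(c:ℤ)).toNat = d + c := by omega
          rw [he]
      rw [wp.eq_def, hinv]
      by_cases hu : hasUpperG t.guard x
      · simp [hu, AC.cst]
      · simp only [hu, if_false, AC.cst]
        rcases Nat.eq_zero_or_pos c with rfl | hc
        · simp; omega
        · exact absurd (hub x c hc hx) hu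
  | lower d o x =>
    simp only [AC.cst] at hφ
    rcases clk x with hx | ⟨c, hx⟩
    · have hinv : upInvA t.update (AC.lower d o x) = AC.tt ∨
          upInvA t.update (AC.lower d o x) = AC.ff := by
        simp only [upInvA, hx]; split <;> simp
      rcases hinv with h1 | h1 <;> rw [wp.eq_def, h1] <;> simp [AC.cst]
    · have hinv : upInvA t.update (AC.lower d o x) = AC.lower (d + c) o x := by
        simp only [upInvA, hx]
        split
        · exfalso; omega
        · have he : ((d:ℤ) - -(c:ℤ)).toNat = d + c := by omega
          rw [he]
      rw [wp.eq_def, hinv]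
      by_cases hcond : hasUpperG t.guard x ∧ minUpperG t.guard x < d + c
      · simp only [hcond, if_true, AC.cst]
        exact hmin x hcond.1
      · simp only [hcond, if_false, AC.cst]
        rcases Nat.eq_zero_or_pos c with rfl | hc
        · omega
        · have hu := hub x c hc hx
          have h2 : ¬ minUpperG t.guard x < d + c := fun hlt => hcond ⟨hu, hlt⟩
          have h3 := hmin x hu
          omega
  | dUpper x y o d =>
    simp only [AC.cst] at hφ
    rcases clk x with hx | ⟨c, hx⟩ <;> rcases clk y with hy | ⟨e, hy⟩
    · have hinv : upInvA t.update (AC.dUpper x y o d) = AC.tt ∨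
          upInvA t.update (AC.dUpper x y o d) = AC.ff := by
        simp only [upInvA, hx, hy]; split <;> simp
      rcases hinv with h1 | h1 <;> rw [wp.eq_def, h1] <;> simp [AC.cst]
    · -- x := 0, y := y - e
      have he := hupc y e hy
      by_cases hK : e < d
      · have hinv : upInvA t.update (AC.dUpper x y o d) = AC.tt := by
          simp only [upInvA, hx, hy]
          split
          · rfl
          · exfalso; omega
        rw [wp.eq_def, hinv]; simp [AC.cst]
      · have hinv : upInvA t.update (AC.dUpper x y o d) = AC.lower (e - d) o y := by
          simp only [upInvA, hx, hy]
          split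
          · exfalso; omega
          · have h1 : (((0:ℕ):ℤ) - -(e:ℤ) - (d:ℤ)).toNat = e - d := by omega
            rw [h1]
        rw [wp.eq_def, hinv]
        by_cases hcond : hasUpperG t.guard y ∧ minUpperG t.guard y < e - d
        · simp only [hcond, if_true, AC.cst]
          exact hmin y hcond.1
        · simp only [hcond, if_false, AC.cst]
          omega
    · -- x := x - c, y := 0
      have hinv : upInvA t.update (AC.dUpper x y o d) = AC.upper x o (d + c) := by
        simp only [upInvA, hx, hy]
        split
        · exfalso; omega
        · have h1 : ((d:ℤ) + ((0:ℕ):ℤ) - -(c:ℤ)).toNat = d + c := by omega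
          rw [h1]
      rw [wp.eq_def, hinv]
      by_cases hu : hasUpperG t.guard x
      · simp [hu, AC.cst]
      · simp only [hu, if_false, AC.cst]
        rcases Nat.eq_zero_or_pos c with rfl | hc
        · simp; omega
        · exact absurd (hub x c hc hx) hu
    · -- x := x - c, y := y - e
      have he := hupc y e hy
      by_cases hK : d + c < e
      · have hinv : upInvA t.update (AC.dUpper x y o d) = AC.dLower (e - d - c) o y x := by
          simp only [upInvA, hx, hy]
          split
          · have h1 : (-((d:ℤ) - -(c:ℤ) + -(e:ℤ))).toNat = e - d - c := by omega
            rw [h1]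
          · exfalso; omega
        rw [wp.eq_def, hinv]
        by_cases hc3 : case3G t.guard y x (e - d - c)
        · simp [hc3, AC.cst]
        · simp only [hc3, if_false, AC.cst]
          omega
      · have hinv : upInvA t.update (AC.dUpper x y o d) = AC.dUpper x y o (d + c - e) := by
          simp only [upInvA, hx, hy]
          split
          · exfalso; omega
          · have h1 : ((d:ℤ) - -(c:ℤ) + -(e:ℤ)).toNat = d + c - e := by omega
            rw [h1]
        rw [wp.eq_def, hinv]
        by_cases hc3 : case3G t.guard x y (d + c - e)
        · simp [hc3, AC.cst]
        · simp only [hc3, if_false, AC.cst]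
          rcases Nat.eq_zero_or_pos c with rfl | hc
          · omega
          · obtain ⟨o₁, c₁, hg₁⟩ := h.2 t ht x c hc hx
            have hc₁ : c₁ ≤ maxGuardConst A := guard_cst_le A ht hg₁
            by_cases hlt : c₁ < d + c - e
            · exact absurd (Or.inl ⟨o₁, c₁, hg₁, hlt⟩) hc3
            · omega
  | dLower d o x y =>
    simp only [AC.cst] at hφ
    rcases clk x with hx | ⟨c, hx⟩ <;> rcases clk y with hy | ⟨e, hy⟩
    · have hinv : upInvA t.update (AC.dLower d o x y) = AC.tt ∨
          upInvA t.update (AC.dLower d o x y) = AC.ff := by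
        simp only [upInvA, hx, hy]; split <;> simp
      rcases hinv with h1 | h1 <;> rw [wp.eq_def, h1] <;> simp [AC.cst]
    · -- x := 0, y := y - e
      have he := hupc y e hy
      by_cases hK : e < d
      · have hinv : upInvA t.update (AC.dLower d o x y) = AC.ff := by
          simp only [upInvA, hx, hy]
          split
          · rfl
          · exfalso; omega
        rw [wp.eq_def, hinv]; simp [AC.cst]
      · have hinv : upInvA t.update (AC.dLower d o x y) = AC.upper y o (e - d) := by
          simp only [upInvA, hx, hy]
          split
          · exfalso; omega
          · have h1 : (((0:ℕ):ℤ) - -(e:ℤ) - (d:ℤ)).toNat = e - d := by omega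
            rw [h1]
        rw [wp.eq_def, hinv]
        by_cases hu : hasUpperG t.guard y
        · simp [hu, AC.cst]
        · simp only [hu, if_false, AC.cst]
          omega
    · -- x := x - c, y := 0
      have hinv : upInvA t.update (AC.dLower d o x y) = AC.lower (d + c) o x := by
        simp only [upInvA, hx, hy]
        split
        · exfalso; omega
        · have h1 : ((d:ℤ) + ((0:ℕ):ℤ) - -(c:ℤ)).toNat = d + c := by omega
          rw [h1]
      rw [wp.eq_def, hinv]
      by_cases hcond : hasUpperG t.guard x ∧ minUpperG t.guard x < d + c
      · simp only [hcond, if_true, AC.cst]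
        exact hmin x hcond.1
      · simp only [hcond, if_false, AC.cst]
        rcases Nat.eq_zero_or_pos c with rfl | hc
        · omega
        · have hu := hub x c hc hx
          have h2 : ¬ minUpperG t.guard x < d + c := fun hlt => hcond ⟨hu, hlt⟩
          have h3 := hmin x hu
          omega
    · -- x := x - c, y := y - e
      have he := hupc y e hy
      by_cases hK : d + c < e
      · have hinv : upInvA t.update (AC.dLower d o x y) = AC.dUpper y x o (e - d - c) := by
          simp only [upInvA, hx, hy]
          split
          · have h1 : (-((d:ℤ) - -(c:ℤ) + -(e:ℤ))).toNat = e - d - c := by omega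
            rw [h1]
          · exfalso; omega
        rw [wp.eq_def, hinv]
        by_cases hc3 : case3G t.guard y x (e - d - c)
        · simp [hc3, AC.cst]
        · simp only [hc3, if_false, AC.cst]
          omega
      · have hinv : upInvA t.update (AC.dLower d o x y) = AC.dLower (d + c - e) o x y := by
          simp only [upInvA, hx, hy]
          split
          · exfalso; omega
          · have h1 : ((d:ℤ) - -(c:ℤ) + -(e:ℤ)).toNat = d + c - e := by omega
            rw [h1]
        rw [wp.eq_def, hinv]
        by_cases hc3 : case3G t.guard x y (d + c - e)
        · simp [hc3, AC.cst]
        · simp only [hc3, if_false, AC.cst]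
          rcases Nat.eq_zero_or_pos c with rfl | hc
          · omega
          · obtain ⟨o₁, c₁, hg₁⟩ := h.2 t ht x c hc hx
            have hc₁ : c₁ ≤ maxGuardConst A := guard_cst_le A ht hg₁
            by_cases hlt : c₁ < d + c - e
            · exact absurd (Or.inl ⟨o₁, c₁, hg₁, hlt⟩) hc3
            · omega

instance : Finite Ineq :=
  Finite.of_injective (fun o : Ineq => match o with | .lt => true | .le => false)
    (by intro a b; cases a <;> cases b <;> simp)

/-- For a timed automaton with syntactically bounded subtraction,
the map assigning to every state the (finite) set of all atomic constraints with
constant at most the maximum constant `M̄` of `A` is a reduced G-map. -/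
theorem stmt9 {Q X : Type} [Fintype Q] [Fintype X] (A : UTA Q X)
    (h : IsSynBoundedSub A) :
    ({φ : AC X | AC.cst φ ≤ max (maxGuardConst A) (maxUpdateConst A)}).Finite ∧
    IsRedGMap A
      (fun _ => {φ : AC X | AC.cst φ ≤ max (maxGuardConst A) (maxUpdateConst A)}) := by
  set M := max (maxGuardConst A) (maxUpdateConst A) with hM
  constructor
  · -- finiteness
    classical
    let enc : (Unit ⊕ Unit) ⊕ ((X × Ineq × Fin (M + 1)) ⊕ (X × Ineq × Fin (M + 1))) ⊕
        ((X × X × Ineq × Fin (M + 1)) ⊕ (X × X × Ineq × Fin (M + 1))) → AC X :=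
      fun s => match s with
        | .inl (.inl _) => .tt
        | .inl (.inr _) => .ff
        | .inr (.inl (.inl ⟨x, o, c⟩)) => .upper x o c
        | .inr (.inl (.inr ⟨x, o, c⟩)) => .lower c o x
        | .inr (.inr (.inl ⟨x, y, o, c⟩)) => .dUpper x y o c
        | .inr (.inr (.inr ⟨x, y, o, c⟩)) => .dLower c o x y
    apply (Set.finite_range enc).subset
    intro φ hφ
    simp only [Set.mem_setOf_eq] at hφ
    cases φ with
    | tt => exact ⟨.inl (.inl ()), rfl⟩
    | ff => exact ⟨.inl (.inr ()), rfl⟩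
    | upper x o c =>
      exact ⟨.inr (.inl (.inl ⟨x, o, ⟨c, Nat.lt_succ_of_le hφ⟩⟩)), rfl⟩
    | lower c o x =>
      exact ⟨.inr (.inl (.inr ⟨x, o, ⟨c, Nat.lt_succ_of_le hφ⟩⟩)), rfl⟩
    | dUpper x y o c =>
      exact ⟨.inr (.inr (.inl ⟨x, y, o, ⟨c, Nat.lt_succ_of_le hφ⟩⟩)), rfl⟩
    | dLower c o x y =>
      exact ⟨.inr (.inr (.inr ⟨x, y, o, ⟨c, Nat.lt_succ_of_le hφ⟩⟩)), rfl⟩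
  · intro t ht
    refine ⟨fun φ hφ => ?_, fun x => ?_, fun φ hφ => ?_⟩
    · exact (guard_cst_le A ht hφ).trans (le_max_left _ _)
    · exact wp_cst_le h ht (by simp [AC.cst])
    · exact wp_cst_le h ht hφ
end

section
/- Let A be a UTA, G₁ its smallest G-map and G₂ its smallest reduced G-map. If G₁ assigns a finite set to every state then so does G₂; moreover, for every state q: every upper-bound constraint x ◁ c in G₂(q) belongs to G₁(q); for every lower-bound constraint c ◁ x in G₂(q) there is a constraint c' ◁' x in G₁(q) with c ≤ c'; and every diagonal constraint in G₂(q) belongs to G₁(q). In particular L(G₂(q))(x) ≤ L(G₁(q))(x) and U(G₂(q))(x) ≤ U(G₁(q))(x) for all q and x, and G₂(q)^d ⊆ G₁(q)^d for all q. -/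
open Classical

section Aux

instance inst_s13 : Finite Ineq :=
  Finite.of_injective (fun o => match o with | .lt => true | .le => false)
    (by intro a b; cases a <;> cases b <;> simp)

variable {Q X : Type}

/-- Constraints dominated by the smallest G-map. -/
def Dom (A : UTA Q X) (q : Q) (φ : AC X) : Prop :=
  φ ∈ minGMap A q ∨ φ = .tt ∨ φ = .ff ∨
    ∃ x o c, φ = AC.lower c o x ∧ ∃ c' o', AC.lower c' o' x ∈ minGMap A q ∧ c ≤ c'

lemma min_isGMap (A : UTA Q X) : IsGMap A (minGMap A) := by
  intro t ht
  refine ⟨?_, ?_, ?_⟩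
  · intro φ hφ
    exact Set.mem_iInter₂.2 fun G hG => (hG t ht).1 φ hφ
  · intro x
    exact Set.mem_iInter₂.2 fun G hG => (hG t ht).2.1 x
  · intro φ hφ
    exact Set.mem_iInter₂.2 fun G hG => (hG t ht).2.2 φ (Set.mem_iInter₂.1 hφ G hG)

lemma wp_dom (A : UTA Q X) (q : Q) (φ : AC X) (g : Guard X) (up : Update X)
    (h : upInvA up φ ∈ minGMap A q) : Dom A q (wp φ g up) := by
  rcases hψ : upInvA up φ with _ | _ | ⟨x, o, c⟩ | ⟨c, o, x⟩ | ⟨x, y, o, c⟩ | ⟨c, o, x, y⟩ <;>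
    rw [hψ] at h <;> simp only [wp, hψ]
  · exact Or.inr (Or.inl rfl)
  · exact Or.inr (Or.inr (Or.inl rfl))
  · split
    · exact Or.inr (Or.inl rfl)
    · exact Or.inl h
  · split
    · rename_i hc
      exact Or.inr (Or.inr (Or.inr ⟨x, .le, _, rfl, c, o, h, le_of_lt hc.2⟩))
    · exact Or.inl h
  · split
    · exact Or.inr (Or.inl rfl)
    · exact Or.inl h
  · split
    · exact Or.inr (Or.inl rfl)
    · exact Or.inl h

lemma lower_dom (A : UTA Q X) (q : Q) (c c' : ℕ) (o o' : Ineq) (x : X)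
    (g : Guard X) (up : Update X) (hcc : c ≤ c')
    (h : upInvA up (AC.lower c' o' x) ∈ minGMap A q) :
    Dom A q (wp (AC.lower c o x) g up) := by
  rcases hx : up x with a | ⟨y, d⟩
  · by_cases hP : Ineq.holds o (c : ℝ) (a : ℝ)
    · have hw : wp (AC.lower c o x) g up = .tt := by

        simp [wp, upInvA, hx, hP]
      rw [hw]; exact Or.inr (Or.inl rfl)
    · have hw : wp (AC.lower c o x) g up = .ff := by

        simp [wp, upInvA, hx, hP]
      rw [hw]; exact Or.inr (Or.inr (Or.inl rfl))
  · by_cases hd : (c : ℤ) - d < 0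
    · have hw : wp (AC.lower c o x) g up = .tt := by

        simp [wp, upInvA, hx, hd]
      rw [hw]; exact Or.inr (Or.inl rfl)
    · have hd' : ¬ ((c' : ℤ) - d < 0) := by omega
      have h' : AC.lower ((c' : ℤ) - d).toNat o' y ∈ minGMap A q := by
        simpa [upInvA, hx, hd'] using h
      have hee : ((c : ℤ) - d).toNat ≤ ((c' : ℤ) - d).toNat := by omega
      have hφ : upInvA up (AC.lower c o x) = AC.lower ((c : ℤ) - d).toNat o y := by
        simp [upInvA, hx, hd]
      by_cases hcase : hasUpperG g y ∧ minUpperG g y < ((c : ℤ) - d).toNat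
      · have hw : wp (AC.lower c o x) g up = AC.lower (minUpperG g y) .le y := by
  
          simp only [wp, hφ]
          rw [if_pos hcase]
        rw [hw]
        exact Or.inr (Or.inr (Or.inr ⟨y, .le, _, rfl, _, o', h',
          le_trans (le_of_lt hcase.2) hee⟩))
      · have hw : wp (AC.lower c o x) g up = AC.lower ((c : ℤ) - d).toNat o y := by
  
          simp only [wp, hφ]
          rw [if_neg hcase]
        rw [hw]
        exact Or.inr (Or.inr (Or.inr ⟨y, o, _, rfl, _, o', h', hee⟩))

lemma dom_red (A : UTA Q X) : IsRedGMap A (fun q => {φ | Dom A q φ}) := by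
  intro t ht
  obtain ⟨h1, h2, h3⟩ := min_isGMap A t ht
  refine ⟨fun φ hφ => Or.inl (h1 φ hφ), fun x => wp_dom A _ _ _ _ (h2 x), ?_⟩
  intro φ hφ
  rcases hφ with h | rfl | rfl | ⟨x, o, c, rfl, c', o', hm, hcc⟩
  · exact wp_dom A _ _ _ _ (h3 φ h)
  · have hw : wp AC.tt t.guard t.update = .tt := by
      simp only [wp]; simp [upInvA]
    rw [hw]; exact Or.inr (Or.inl rfl)
  · have hw : wp AC.ff t.guard t.update = .ff := by
      simp only [wp]; simp [upInvA]
    rw [hw]; exact Or.inr (Or.inr (Or.inl rfl))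
  · exact lower_dom A _ c c' o o' x _ _ hcc (h3 _ hm)

lemma minRed_subset (A : UTA Q X) (q : Q) :
    minRedGMap A q ⊆ {φ | Dom A q φ} :=
  Set.biInter_subset_of_mem (dom_red A)

lemma dom_finite (A : UTA Q X) (q : Q) (hfin : (minGMap A q).Finite) :
    {φ | Dom A q φ}.Finite := by
  have hS : {φ : AC X | ∃ x o c, φ = AC.lower c o x ∧
      ∃ c' o', AC.lower c' o' x ∈ minGMap A q ∧ c ≤ c'}.Finite := by
    have hsub : {φ : AC X | ∃ x o c, φ = AC.lower c o x ∧
        ∃ c' o', AC.lower c' o' x ∈ minGMap A q ∧ c ≤ c'} ⊆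
        ⋃ ψ ∈ minGMap A q,
          {φ | ∃ x o c, φ = AC.lower c o x ∧ ∃ c' o', ψ = AC.lower c' o' x ∧ c ≤ c'} := by
      rintro φ ⟨x, o, c, rfl, c', o', hm, hcc⟩
      exact Set.mem_biUnion hm ⟨x, o, c, rfl, c', o', rfl, hcc⟩
    refine Set.Finite.subset (Set.Finite.biUnion hfin fun ψ _ => ?_) hsub
    rcases ψ with _ | _ | ⟨x', o', c'⟩ | ⟨c', o', x'⟩ | _ | _
    case lower =>
      refine Set.Finite.subset (((Set.finite_Iic c').prod Set.finite_univ).image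
        (fun p : ℕ × Ineq => AC.lower p.1 p.2 x')) ?_
      rintro φ ⟨x, o, c, rfl, c'', o'', heq, hcc⟩
      obtain ⟨h1, h2, h3⟩ := AC.lower.inj heq
      subst h1; subst h3
      exact ⟨(c, o), ⟨Set.mem_Iic.2 hcc, trivial⟩, rfl⟩
    all_goals
      refine Set.Finite.subset Set.finite_empty ?_
      rintro φ ⟨x, o, c, rfl, c'', o'', heq, hcc⟩
      exact absurd heq (by simp)
  have : {φ | Dom A q φ} ⊆ (minGMap A q ∪ {AC.tt, AC.ff}) ∪
      {φ : AC X | ∃ x o c, φ = AC.lower c o x ∧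
        ∃ c' o', AC.lower c' o' x ∈ minGMap A q ∧ c ≤ c'} := by
    rintro φ (h | rfl | rfl | h)
    · exact Or.inl (Or.inl h)
    · exact Or.inl (Or.inr (Or.inl rfl))
    · exact Or.inl (Or.inr (Or.inr rfl))
    · exact Or.inr h
  exact Set.Finite.subset ((hfin.union ((Set.finite_singleton AC.ff).insert AC.tt)).union hS)
    this

end Aux

/-- Theorem `sound-finite-reduced-finite`. If the smallest
(non-reduced) G-map `G₁` of `A` is finite then so is the smallest reduced G-map
`G₂`; moreover upper-bound and diagonal constraints of `G₂` appear in `G₁`, each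
lower-bound constraint `c ◁ x` of `G₂` is dominated by some `c' ◁' x` in `G₁` with
`c ≤ c'`; in particular `LU(G₂) ≤ LU(G₁)` and `G₂^d ⊆ G₁^d`. -/
theorem stmt13 {Q X : Type} [Fintype Q] [Fintype X] (A : UTA Q X)
    (hfin : ∀ q, (minGMap A q).Finite) :
    (∀ q, (minRedGMap A q).Finite) ∧
    (∀ q x o c, AC.upper x o c ∈ minRedGMap A q → AC.upper x o c ∈ minGMap A q) ∧
    (∀ q x o c, AC.lower c o x ∈ minRedGMap A q →
        ∃ c' o', AC.lower c' o' x ∈ minGMap A q ∧ c ≤ c') ∧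
    (∀ q φ, φ ∈ minRedGMap A q → AC.isDiag φ → φ ∈ minGMap A q) ∧
    (∀ q x, Lb (minRedGMap A q) x ≤ Lb (minGMap A q) x ∧
            Ub (minRedGMap A q) x ≤ Ub (minGMap A q) x) ∧
    (∀ q, diagOf (minRedGMap A q) ⊆ diagOf (minGMap A q)) := by
  have hsub := minRed_subset A
  have claim2 : ∀ q x o c, AC.upper x o c ∈ minRedGMap A q →
      AC.upper x o c ∈ minGMap A q := by
    intro q x o c h
    rcases hsub q h with h | h | h | ⟨x', o', c', heq, _⟩ <;> first
      | exact h
      | exact absurd h (by simp)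
      | exact absurd heq (by simp)
  have claim3 : ∀ q x o c, AC.lower c o x ∈ minRedGMap A q →
      ∃ c' o', AC.lower c' o' x ∈ minGMap A q ∧ c ≤ c' := by
    intro q x o c h
    rcases hsub q h with h | h | h | ⟨x', o', c', heq, c', o', hm, hcc⟩
    · exact ⟨c, o, h, le_refl c⟩
    · exact absurd h (by simp)
    · exact absurd h (by simp)
    · obtain ⟨h1, h2, h3⟩ := AC.lower.inj heq
      subst h1; subst h3
      exact ⟨c', o', hm, hcc⟩
  have claim4 : ∀ q φ, φ ∈ minRedGMap A q → AC.isDiag φ → φ ∈ minGMap A q := by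
    intro q φ h hd
    rcases hsub q h with h | rfl | rfl | ⟨x', o', c', rfl, _⟩ <;>
      first | exact h | exact absurd hd (by simp [AC.isDiag])
  refine ⟨fun q => Set.Finite.subset (dom_finite A q (hfin q)) (hsub q),
    claim2, claim3, claim4, ?_, ?_⟩
  · intro q x
    constructor
    · simp only [Lb]
      refine iSup₂_le fun c hc => ?_
      obtain ⟨o, hm⟩ := hc
      obtain ⟨c', o', hm', hcc⟩ := claim3 q x o c hm
      have h1 : ((c : ℕ∞) : WithBot ℕ∞) ≤ ((c' : ℕ∞) : WithBot ℕ∞) := by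
        exact_mod_cast hcc
      exact le_trans h1 (le_iSup₂ (f := fun (c : ℕ) (_ : c ∈ {c : ℕ | ∃ o,
        AC.lower c o x ∈ minGMap A q}) => ((c : ℕ∞) : WithBot ℕ∞)) c' ⟨o', hm'⟩)
    · simp only [Ub]
      refine iSup₂_le fun c hc => ?_
      obtain ⟨o, hm⟩ := hc
      exact le_iSup₂ (f := fun (c : ℕ) (_ : c ∈ {c : ℕ | ∃ o,
        AC.upper x o c ∈ minGMap A q}) => ((c : ℕ∞) : WithBot ℕ∞)) c
        ⟨o, claim2 q x o c hm⟩
  · intro q φ hφ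
    exact ⟨claim4 q φ hφ.1 hφ.2, hφ.2⟩
end
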